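/- arXiv:1911.07745 — 3 statements merged into one kernel-verified Lean document; each statement's English description precedes it below -/
import Mathlib

section
/- Let G be a σ-finite abelian group with exhausting sequence (G_n)_{n≥0} such that |G_{n+1}|/|G_n| → ∞ as n → ∞. Let A = ⋃_{n≥1} (G_{2n} \ G_{2n−1}) and B = ⋃_{n≥0} (G_{2n+1} \ G_{2n}). Then d_up(A) = 1, d_up(B) = 1, and d_up(A+B) = 1; in particular d_up(A+B) < d_up(A) + d_up(B). -/
open Filter Pointwise

/-- Upper asymptotic density of `A` relative to the exhausting sequence `Gn`. -/
noncomputable def dUpp {G : Type*} [AddCommGroup G] (Gn : ℕ → AddSubgroup G) (A : Set G) : ℝ :=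
  limsup (fun n => (Nat.card ↥(A ∩ (Gn n : Set G)) : ℝ) / (Nat.card ↥(Gn n) : ℝ)) atTop

private lemma limsup_eq_one_aux (f : ℕ → ℝ) (h1 : ∀ n, f n ≤ 1)
    (φ : ℕ → ℕ) (hφ : Tendsto φ atTop atTop)
    (hf : Tendsto (fun n => f (φ n)) atTop (nhds 1)) :
    limsup f atTop = 1 := by
  have hbdd : IsBoundedUnder (· ≤ ·) atTop f := isBoundedUnder_of ⟨1, fun n => h1 n⟩
  have hfreq : ∀ a : ℝ, a < 1 → ∃ᶠ n in atTop, a ≤ f n := by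
    intro a ha
    have h2 : ∀ᶠ n in atTop, a ≤ f (φ n) := hf.eventually (eventually_ge_nhds ha)
    by_contra h
    rw [not_frequently] at h
    rcases ((hφ.eventually h).and h2).exists with ⟨n, hn1, hn2⟩
    exact hn1 hn2
  have hco : IsCoboundedUnder (· ≤ ·) atTop f :=
    IsCoboundedUnder.of_frequently_ge (hfreq 0 one_pos)
  have hle : limsup f atTop ≤ 1 := limsup_le_of_le hco (Eventually.of_forall h1)
  have hge : 1 ≤ limsup f atTop := by
    by_contra h
    push_neg at h
    set L := limsup f atTop with hL
    have h1a : (L + 1) / 2 < 1 := by linarith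
    have h2a : L < (L + 1) / 2 := by linarith
    exact absurd (le_limsup_of_frequently_le (hfreq _ h1a) hbdd) (not_le.2 h2a)
  linarith

private lemma nat_card_subgroup_eq' {G : Type*} [AddCommGroup G] (H : AddSubgroup G) :
    Nat.card ↥H = (H : Set G).ncard := by
  rw [← Nat.card_coe_set_eq]
  rfl

private lemma nat_card_subgroup_eq {G : Type*} [AddCommGroup G] (H : AddSubgroup G) :
    (Nat.card ↥H : ℝ) = ((H : Set G).ncard : ℝ) := by
  rw [nat_card_subgroup_eq']

set_option maxHeartbeats 1000000 in
private lemma dUpp_eq_one_aux {G : Type*} [AddCommGroup G]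
    (Gn : ℕ → AddSubgroup G) (hmono : Monotone Gn)
    (hfin : ∀ n, (Gn n : Set G).Finite)
    (hratio : Tendsto (fun n => (Nat.card ↥(Gn (n + 1)) : ℝ) / (Nat.card ↥(Gn n) : ℝ))
      atTop atTop)
    (S : Set G) (p : ℕ → ℕ) (hp : Tendsto p atTop atTop)
    (hcard : ∀ᶠ n in atTop,
      ((Gn (p n + 1) : Set G) \ (Gn (p n) : Set G)).ncard ≤ (S ∩ (Gn (p n + 1) : Set G)).ncard) :
    dUpp Gn S = 1 := by
  set f : ℕ → ℝ :=
    fun n => (Nat.card ↥(S ∩ (Gn n : Set G)) : ℝ) / (Nat.card ↥(Gn n) : ℝ) with hfdef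
  have hcpos : ∀ n, (0 : ℝ) < (Nat.card ↥(Gn n) : ℝ) := by
    intro n
    rw [nat_card_subgroup_eq]
    exact_mod_cast (Set.ncard_pos (hfin n)).2 ⟨0, (Gn n).zero_mem⟩
  have hcpos' : ∀ n, (0 : ℝ) < (((Gn n : Set G)).ncard : ℝ) := by
    intro n
    rw [← nat_card_subgroup_eq]
    exact hcpos n
  have hcS : ∀ n, (Nat.card ↥(S ∩ (Gn n : Set G)) : ℝ) = ((S ∩ (Gn n : Set G)).ncard : ℝ) := by
    intro n; rw [Nat.card_coe_set_eq]
  have h1 : ∀ n, f n ≤ 1 := by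
    intro n
    rw [hfdef]
    simp only
    rw [div_le_one (hcpos n), hcS, nat_card_subgroup_eq]
    exact_mod_cast Set.ncard_le_ncard Set.inter_subset_right (hfin n)
  -- the lower bound sequence
  set g : ℕ → ℝ :=
    fun n => 1 - (Nat.card ↥(Gn (p n)) : ℝ) / (Nat.card ↥(Gn (p n + 1)) : ℝ) with hgdef
  have hg : Tendsto g atTop (nhds 1) := by
    have h0 : Tendsto
        (fun n => (Nat.card ↥(Gn (p n)) : ℝ) / (Nat.card ↥(Gn (p n + 1)) : ℝ)) atTop (nhds 0) := by
      have h := (hratio.comp hp).inv_tendsto_atTop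
      have heq : ((fun n => (Nat.card ↥(Gn (n + 1)) : ℝ) / (Nat.card ↥(Gn n) : ℝ)) ∘ p)⁻¹
          = fun n => (Nat.card ↥(Gn (p n)) : ℝ) / (Nat.card ↥(Gn (p n + 1)) : ℝ) := by
        funext n
        simp [Function.comp, inv_div]
      rwa [heq] at h
    have := h0.const_sub 1
    simpa using this
  have hlow : ∀ᶠ n in atTop, g n ≤ f (p n + 1) := by
    filter_upwards [hcard] with n hn
    have hsub : (Gn (p n) : Set G) ⊆ (Gn (p n + 1) : Set G) := hmono (Nat.le_succ _)
    have hdiff : (((Gn (p n + 1) : Set G) \ (Gn (p n) : Set G)).ncard : ℝ)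
        = ((Gn (p n + 1) : Set G).ncard : ℝ) - ((Gn (p n) : Set G).ncard : ℝ) := by
      rw [Set.ncard_diff hsub (hfin _), Nat.cast_sub (Set.ncard_le_ncard hsub (hfin _))]
    have hle' : ((Gn (p n + 1) : Set G).ncard : ℝ) - ((Gn (p n) : Set G).ncard : ℝ)
        ≤ ((S ∩ (Gn (p n + 1) : Set G)).ncard : ℝ) := by
      rw [← hdiff]; exact_mod_cast hn
    have hpos := hcpos' (p n + 1)
    rw [hgdef, hfdef]
    simp only
    rw [hcS, nat_card_subgroup_eq, nat_card_subgroup_eq]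
    calc 1 - (((Gn (p n) : Set G)).ncard : ℝ) / (((Gn (p n + 1) : Set G)).ncard : ℝ)
        = ((((Gn (p n + 1) : Set G)).ncard : ℝ) - (((Gn (p n) : Set G)).ncard : ℝ))
            / (((Gn (p n + 1) : Set G)).ncard : ℝ) := by
          rw [sub_div, div_self hpos.ne']
      _ ≤ ((S ∩ (Gn (p n + 1) : Set G)).ncard : ℝ) / (((Gn (p n + 1) : Set G)).ncard : ℝ) := by
          exact (div_le_div_iff_of_pos_right hpos).2 hle'
  have hcomp : Tendsto (fun n => f (p n + 1)) atTop (nhds 1) :=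
    tendsto_of_tendsto_of_tendsto_of_le_of_le' hg tendsto_const_nhds hlow
      (Eventually.of_forall fun n => h1 _)
  exact limsup_eq_one_aux f h1 (fun n => p n + 1)
    (tendsto_atTop_mono (fun n => Nat.le_succ (p n)) hp) hcomp

theorem layers_construction_upper_density {G : Type*} [AddCommGroup G] [Infinite G]
    (Gn : ℕ → AddSubgroup G) (hmono : Monotone Gn)
    (hfin : ∀ n, (Gn n : Set G).Finite)
    (hexh : ∀ x : G, ∃ n, x ∈ Gn n)
    (hratio : Tendsto (fun n => (Nat.card ↥(Gn (n + 1)) : ℝ) / (Nat.card ↥(Gn n) : ℝ))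
      atTop atTop)
    (A B : Set G)
    (hA : A = ⋃ n : ℕ, ((Gn (2 * (n + 1)) : Set G) \ (Gn (2 * (n + 1) - 1) : Set G)))
    (hB : B = ⋃ n : ℕ, ((Gn (2 * n + 1) : Set G) \ (Gn (2 * n) : Set G))) :
    dUpp Gn A = 1 ∧ dUpp Gn B = 1 ∧ dUpp Gn (A + B) = 1 ∧
    dUpp Gn (A + B) < dUpp Gn A + dUpp Gn B := by
  have hAsub : ∀ n : ℕ, (Gn (2 * n + 2) : Set G) \ (Gn (2 * n + 1) : Set G) ⊆ A := by
    intro n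
    rw [hA]
    intro x hx
    refine Set.mem_iUnion.2 ⟨n, ?_⟩
    have h1 : 2 * (n + 1) = 2 * n + 2 := by ring
    have h2 : 2 * (n + 1) - 1 = 2 * n + 1 := by omega
    rw [h2, h1]
    exact hx
  have htwo : Tendsto (fun n : ℕ => 2 * n) atTop atTop :=
    tendsto_atTop_atTop.2 fun b => ⟨b, fun n hn => by omega⟩
  have hodd : Tendsto (fun n : ℕ => 2 * n + 1) atTop atTop :=
    tendsto_atTop_mono (fun n => Nat.le_succ (2 * n)) htwo
  have hdA : dUpp Gn A = 1 := by
    refine dUpp_eq_one_aux Gn hmono hfin hratio A (fun n => 2 * n + 1)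
      hodd ?_
    refine Eventually.of_forall fun n => ?_
    refine Set.ncard_le_ncard ?_ ((hfin _).subset Set.inter_subset_right)
    intro x hx
    exact ⟨hAsub n hx, hx.1⟩
  have hdB : dUpp Gn B = 1 := by
    refine dUpp_eq_one_aux Gn hmono hfin hratio B (fun n => 2 * n) htwo ?_
    refine Eventually.of_forall fun n => ?_
    refine Set.ncard_le_ncard ?_ ((hfin _).subset Set.inter_subset_right)
    intro x hx
    refine ⟨?_, hx.1⟩
    rw [hB]
    exact Set.mem_iUnion.2 ⟨n, hx⟩
  -- find b ∈ B
  obtain ⟨m, hm⟩ := (hratio.eventually_gt_atTop 1).exists_forall_of_atTop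
  have hmlt : Nat.card ↥(Gn (2 * m)) < Nat.card ↥(Gn (2 * m + 1)) := by
    have h := hm (2 * m) (by omega)
    have hpos : (0 : ℝ) < (Nat.card ↥(Gn (2 * m)) : ℝ) := by
      rw [nat_card_subgroup_eq]
      exact_mod_cast (Set.ncard_pos (hfin _)).2 ⟨0, (Gn _).zero_mem⟩
    rw [lt_div_iff₀ hpos, one_mul] at h
    exact_mod_cast h
  have hbex : ∃ b, b ∈ (Gn (2 * m + 1) : Set G) \ (Gn (2 * m) : Set G) := by
    by_contra h
    push_neg at h
    have hsub : (Gn (2 * m + 1) : Set G) ⊆ (Gn (2 * m) : Set G) := by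
      intro x hx
      by_contra hx2
      exact (h x ⟨hx, hx2⟩)
    have hle2 : Nat.card ↥(Gn (2 * m + 1)) ≤ Nat.card ↥(Gn (2 * m)) := by
      rw [nat_card_subgroup_eq', nat_card_subgroup_eq']
      exact Set.ncard_le_ncard hsub (hfin _)
    omega
  obtain ⟨b, hb⟩ := hbex
  have hbB : b ∈ B := by rw [hB]; exact Set.mem_iUnion.2 ⟨m, hb⟩
  have hdAB : dUpp Gn (A + B) = 1 := by
    refine dUpp_eq_one_aux Gn hmono hfin hratio (A + B) (fun n => 2 * n + 1) hodd ?_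
    filter_upwards [eventually_ge_atTop m] with n hn
    set D := (Gn (2 * n + 1 + 1) : Set G) \ (Gn (2 * n + 1) : Set G) with hD
    have himg : (fun x => x + b) '' D ⊆ (A + B) ∩ (Gn (2 * n + 1 + 1) : Set G) := by
      rintro _ ⟨x, hx, rfl⟩
      have hxA : x ∈ A := by
        have hx' : x ∈ (Gn (2 * n + 2) : Set G) \ (Gn (2 * n + 1) : Set G) := hx
        exact hAsub n hx'
      have hbG : b ∈ (Gn (2 * n + 1 + 1) : Set G) :=
        hmono (by omega : 2 * m + 1 ≤ 2 * n + 1 + 1) hb.1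
      exact ⟨Set.add_mem_add hxA hbB, (Gn (2 * n + 1 + 1)).add_mem hx.1 hbG⟩
    calc D.ncard = ((fun x => x + b) '' D).ncard :=
          (Set.ncard_image_of_injective D (add_left_injective b)).symm
      _ ≤ ((A + B) ∩ (Gn (2 * n + 1 + 1) : Set G)).ncard :=
          Set.ncard_le_ncard himg ((hfin _).subset Set.inter_subset_right)
  exact ⟨hdA, hdB, hdAB, by rw [hdA, hdB, hdAB]; norm_num⟩
end

section
/- Let G be a σ-finite abelian group with exhausting sequence (G_n)_{n≥0}, and for each n ≥ 1 let x_n ∈ G_{n+1} \ G_n with 2x_n ∉ G_n. Let A = ⋃_{n≥1} (x_n + G_n). Then A ∩ (−A) = ∅, where −A = {−a : a ∈ A}. -/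
open Pointwise

theorem coset_union_disjoint_neg {G : Type*} [AddCommGroup G] [Infinite G]
    (Gn : ℕ → AddSubgroup G) (hmono : Monotone Gn)
    (hfin : ∀ n, (Gn n : Set G).Finite)
    (hexh : ∀ g : G, ∃ n, g ∈ Gn n)
    (x : ℕ → G) (hx : ∀ n, 1 ≤ n → x n ∈ (Gn (n + 1) : Set G) \ (Gn n : Set G))
    (hx2 : ∀ n, 1 ≤ n → x n + x n ∉ Gn n)
    (A : Set G)
    (hA : A = ⋃ n ∈ Set.Ici 1, ({x n} + (Gn n : Set G))) :
    A ∩ (-A) = ∅ := by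
  have key : ∀ m n g h : _, 1 ≤ m → 1 ≤ n → m ≤ n → g ∈ Gn m → h ∈ Gn n →
      x m + g + (x n + h) = 0 → False := by
    intro m n g h hm hn hmn hg hh heq
    rcases eq_or_lt_of_le hmn with rfl | hlt
    · apply hx2 m hm
      have : x m + x m = -(g + h) := by rw [eq_neg_iff_add_eq_zero, ← heq]; abel
      rw [this]
      exact neg_mem (add_mem hg hh)
    · apply (hx n hn).2
      have hxm : x m ∈ Gn n := hmono (by omega : m + 1 ≤ n) (hx m hm).1
      have : x n = -(x m + g + h) := by rw [eq_neg_iff_add_eq_zero, ← heq]; abel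
      rw [this]
      exact neg_mem (add_mem (add_mem hxm (hmono hmn hg)) hh)
  ext a
  simp only [Set.mem_inter_iff, Set.mem_empty_iff_false, iff_false]
  rintro ⟨ha, hna⟩
  rw [Set.mem_neg] at hna
  subst hA
  simp only [Set.mem_iUnion, Set.mem_Ici, Set.singleton_add, Set.mem_image,
    SetLike.mem_coe] at ha hna
  obtain ⟨m, hm, g, hg, rfl⟩ := ha
  obtain ⟨n, hn, h, hh, heq⟩ := hna
  have hsum : x m + g + (x n + h) = 0 := by rw [heq]; abel
  rcases le_total m n with hmn | hmn
  · exact key m n g h hm hn hmn hg hh hsum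
  · exact key n m h g hn hm hmn hh hg (by rw [← hsum]; abel)
end

section
/- Let G be a σ-finite abelian group with exhausting sequence (G_n), let H ≤ G be a subgroup, and suppose there exists a positive integer k such that for all sufficiently large n the index [G_n : H ∩ G_n] divides k. Then [G : H] is finite and divides k, and moreover for all sufficiently large n one has |H ∩ G_n|/|G_n| = 1/[G : H]; in particular H has asymptotic density d(H) = 1/[G : H]. -/
open Filter

theorem finite_index_of_eventually_relindex_dvd {G : Type*} [AddCommGroup G] [Infinite G]
    (Gn : ℕ → AddSubgroup G) (hmono : Monotone Gn)
    (hfin : ∀ n, (Gn n : Set G).Finite)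
    (hexh : ∀ g : G, ∃ n, g ∈ Gn n)
    (H : AddSubgroup G) (k : ℕ) (hk : 0 < k)
    (hdvd : ∀ᶠ n in atTop, H.relIndex (Gn n) ∣ k) :
    H.FiniteIndex ∧ H.index ∣ k ∧
    (∀ᶠ n in atTop,
      (Nat.card ↥((H : Set G) ∩ (Gn n : Set G)) : ℝ) / (Nat.card ↥(Gn n) : ℝ)
        = 1 / (H.index : ℝ)) ∧
    Tendsto (fun n => (Nat.card ↥((H : Set G) ∩ (Gn n : Set G)) : ℝ) / (Nat.card ↥(Gn n) : ℝ))
      atTop (nhds (1 / (H.index : ℝ))) := by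
  classical
  obtain ⟨N, hN⟩ := eventually_atTop.mp hdvd
  set π : G →+ G ⧸ H := QuotientAddGroup.mk' H with hπ
  set Q : ℕ → AddSubgroup (G ⧸ H) := fun n => (Gn n).map π with hQ
  have hGfin : ∀ n, Finite ↥(Gn n) := fun n => (hfin n).to_subtype
  have hQsetfin : ∀ n, ((Q n : Set (G ⧸ H))).Finite := by
    intro n
    simpa [hQ, AddSubgroup.coe_map] using (hfin n).image π
  have hQfin : ∀ n, Finite ↥(Q n) := fun n => (hQsetfin n).to_subtype
  have hQmono : Monotone Q := fun a b hab => AddSubgroup.map_mono (hmono hab)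
  have hrel : ∀ n, H.relIndex (Gn n) = Nat.card (Q n) := by
    intro n
    have := AddSubgroup.relIndex_ker (K := Gn n) π
    rwa [QuotientAddGroup.ker_mk'] at this
  set f : ℕ → ℕ := fun n => Nat.card (Q n) with hf
  have hfpos : ∀ n, 0 < f n := fun n => @Nat.card_pos _ _ (hQfin n)
  have hfmono : Monotone f := fun a b hab =>
    Nat.le_of_dvd (hfpos b) (AddSubgroup.card_dvd_of_le (hQmono hab))
  have hfk : ∀ n ≥ N, f n ∣ k := by
    intro n hn
    have := hN n hn
    rwa [hrel n] at this
  have hbdd : ∀ n, f (max n N) ≤ k :=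
    fun n => Nat.le_of_dvd hk (hfk _ (le_max_right _ _))
  obtain ⟨M, hM⟩ : ∃ M, ∀ n, f (max n N) ≤ f (max M N) := by
    have hne : (Set.range fun n => f (max n N)).Nonempty := ⟨f (max 0 N), ⟨0, rfl⟩⟩
    have hbd : BddAbove (Set.range fun n => f (max n N)) := ⟨k, fun x ⟨n, hn⟩ => hn ▸ hbdd n⟩
    obtain ⟨M, hM⟩ := Nat.sSup_mem hne hbd
    exact ⟨M, fun n => le_trans (le_csSup hbd ⟨n, rfl⟩) (le_of_eq hM.symm)⟩
  set M' := max M N with hM'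
  have hconst : ∀ n ≥ M', f n = f M' := by
    intro n hn
    refine le_antisymm ?_ (hfmono hn)
    calc f n = f (max n N) := by rw [max_eq_left ((le_max_right M N).trans hn)]
    _ ≤ f M' := hM n
  have hQeq : ∀ n ≥ M', Q n = Q M' := by
    intro n hn
    refine le_antisymm ?_ (hQmono hn)
    have hsub : (Q M' : Set (G ⧸ H)) ⊆ (Q n : Set (G ⧸ H)) := hQmono hn
    have hcard : (Q n : Set (G ⧸ H)).ncard ≤ (Q M' : Set (G ⧸ H)).ncard := by
      rw [← Nat.card_coe_set_eq, ← Nat.card_coe_set_eq]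
      exact le_of_eq (hconst n hn)
    exact le_of_eq (SetLike.coe_injective
      ((Set.eq_of_subset_of_ncard_le hsub hcard (hQsetfin n)).symm))
  have hQtop : (⊤ : AddSubgroup (G ⧸ H)) = Q M' := by
    refine le_antisymm ?_ le_top
    intro x _
    obtain ⟨g, rfl⟩ := QuotientAddGroup.mk'_surjective H x
    obtain ⟨n, hn⟩ := hexh g
    have : π g ∈ Q (max n M') :=
      AddSubgroup.mem_map_of_mem π (hmono (le_max_left n M') hn)
    rwa [hQeq (max n M') (le_max_right n M')] at this
  set d := f M' with hd
  have hindex : H.index = d := by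
    have h2 : Nat.card (G ⧸ H) = Nat.card (⊤ : AddSubgroup (G ⧸ H)) :=
      (Nat.card_congr AddSubgroup.topEquiv.toEquiv).symm
    show Nat.card (G ⧸ H) = d
    rw [h2, hQtop]
  have hdk : d ∣ k := hfk M' (le_max_right M N)
  have hFI : H.FiniteIndex := ⟨by rw [hindex]; exact (hfpos M').ne'⟩
  have hev : ∀ᶠ n in atTop,
      (Nat.card ↥((H : Set G) ∩ (Gn n : Set G)) : ℝ) / (Nat.card ↥(Gn n) : ℝ)
        = 1 / (H.index : ℝ) := by
    rw [eventually_atTop]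
    refine ⟨M', fun n hn => ?_⟩
    have hcards : Nat.card ↥((H : Set G) ∩ (Gn n : Set G)) = Nat.card ↥(H ⊓ Gn n) := by
      congr 1
    have hcardEq : Nat.card ↥(H ⊓ Gn n) = Nat.card ↥(H.addSubgroupOf (Gn n)) := by
      rw [← AddSubgroup.inf_addSubgroupOf_right]
      exact (Nat.card_congr (AddSubgroup.addSubgroupOfEquivOfLe inf_le_right).toEquiv).symm
    have hlag : Nat.card ↥(H.addSubgroupOf (Gn n)) * H.relIndex (Gn n) = Nat.card ↥(Gn n) :=
      AddSubgroup.card_mul_index _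
    have hrn : H.relIndex (Gn n) = d := by rw [hrel n]; exact hconst n hn
    have hc : Nat.card ↥((H : Set G) ∩ (Gn n : Set G)) * d = Nat.card ↥(Gn n) := by
      rw [hcards, hcardEq, ← hrn, hlag]
    have hcpos : 0 < Nat.card ↥((H : Set G) ∩ (Gn n : Set G)) := by
      refine Nat.pos_of_ne_zero fun h0 => ?_
      have : (0 : ℕ) = Nat.card ↥(Gn n) := by rw [← hc, h0, zero_mul]
      exact absurd this.symm (@Nat.card_pos _ _ (hGfin n)).ne'
    have hdpos : 0 < d := hfpos M'
    rw [hindex]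
    have hGR : (Nat.card ↥(Gn n) : ℝ)
        = (Nat.card ↥((H : Set G) ∩ (Gn n : Set G)) : ℝ) * d := by
      exact_mod_cast hc.symm
    rw [hGR, div_eq_div_iff
      (mul_ne_zero (Nat.cast_ne_zero.mpr hcpos.ne') (Nat.cast_ne_zero.mpr hdpos.ne'))
      (Nat.cast_ne_zero.mpr hdpos.ne')]
    ring
  exact ⟨hFI, hindex ▸ hdk, hev,
    Tendsto.congr' (hev.mono fun n hn => hn.symm) tendsto_const_nhds⟩
end
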